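/- Let R be a commutative ring in which every element is a sum of two units (weakly 2-fold stable), let M be an R-module, and let f : (R^*)^n → M be a map satisfying: (i) f is alternating (swapping adjacent arguments negates the value, and the value is 0 if two adjacent arguments are equal); (ii) the Leibniz rule f(r₁r₁', r₂,…,r_n) = r₁·f(r₁',r₂,…,r_n) + r₁'·f(r₁,r₂,…,r_n); (iii) additive multilinearity: whenever units r₁₁,…,r_{1N} (N ≥ 2) satisfy r₁₁ + … + r_{1N} = 0, the sum Σ_j f(r_{1j}, r₂, …, r_n) = 0. Then there is a unique R-module homomorphism F : Ω^n_R → M with F(s·dr₁∧…∧dr_n) = s·f(r₁,…,r_n) for all units r₁,…,r_n and all s ∈ R. -/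

import Mathlib

/-- The differential form `s·dr₁ ∧ … ∧ dr_n` in `Ω^n_R = ⋀^n Ω¹_{R/ℤ}`. -/
noncomputable def wedgeD (R : Type*) [CommRing R] (n : ℕ) (s : R) (r : Fin n → Rˣ) :
    ⋀[R]^n (Ω[R⁄ℤ]) :=
  s • ⟨ExteriorAlgebra.ιMulti R n (fun i => KaehlerDifferential.D ℤ R ((r i : R))),
    ExteriorAlgebra.ιMulti_range R n (Set.mem_range_self _)⟩

open Function

namespace Stmt16Aux

variable {R : Type*} [CommRing R] {M : Type*} [AddCommGroup M] [Module R M] {n : ℕ}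

set_option linter.unusedSectionVars false





/-- Extension lemma with pinned slots: two multilinear maps on `Ω` agreeing on tuples whose
non-pinned slots lie in a spanning set agree on all tuples with the given pins. -/
theorem ml_ext_pinned {k : ℕ} (S : Set (Ω[R⁄ℤ])) (hS : Submodule.span R S = ⊤)
    (Φ Ψ : MultilinearMap R (fun _ : Fin k => Ω[R⁄ℤ]) M) (T : Set (Fin k))
    (v₀ : Fin k → Ω[R⁄ℤ])
    (h : ∀ v : Fin k → Ω[R⁄ℤ], (∀ i ∈ T, v i = v₀ i) → (∀ i ∉ T, v i ∈ S) → Φ v = Ψ v) :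
    ∀ v : Fin k → Ω[R⁄ℤ], (∀ i ∈ T, v i = v₀ i) → Φ v = Ψ v := by
  have C : ∀ j : ℕ, ∀ v, (∀ i ∈ T, v i = v₀ i) →
      (∀ i : Fin k, i ∉ T → j ≤ (i : ℕ) → v i ∈ S) → Φ v = Ψ v := by
    intro j
    induction j with
    | zero => exact fun v hp hs => h v hp fun i hi => hs i hi (Nat.zero_le _)
    | succ j ih =>
      intro v hp hs
      by_cases hj : j < k
      · set jj : Fin k := ⟨j, hj⟩ with hjj
        by_cases hjT : jj ∈ T
        · refine ih v hp fun i hiT hji => ?_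
          rcases eq_or_lt_of_le hji with he | hl
          · exact absurd (show i = jj from Fin.ext he.symm) fun hijj => hiT (hijj ▸ hjT)
          · exact hs i hiT hl
        · have key : ∀ x ∈ Submodule.span R S,
              Φ (update v jj x) = Ψ (update v jj x) := by
            intro x hx
            induction hx using Submodule.span_induction with
            | mem x hxS =>
              refine ih (update v jj x) (fun i hiT => ?_) (fun i hiT hji => ?_)
              · rw [update_of_ne (fun hi : i = jj => hjT (hi ▸ hiT)) _ v]
                exact hp i hiT
              · by_cases hij : i = jj
                · subst hij; rw [update_self]; exact hxS
                · rw [update_of_ne hij _ v]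
                  refine hs i hiT ?_
                  rcases eq_or_lt_of_le hji with he | hl
                  · exact absurd (Fin.ext he.symm) hij
                  · exact hl
            | zero =>
              rw [Φ.map_coord_zero jj (update_self _ _ _),
                Ψ.map_coord_zero jj (update_self _ _ _)]
            | add x y hxm hym hx hy =>
              rw [Φ.map_update_add, Ψ.map_update_add, hx, hy]
            | smul c x hxm hx =>
              rw [Φ.map_update_smul, Ψ.map_update_smul, hx]
          have := key (v jj) (by rw [hS]; trivial)
          rwa [update_eq_self] at this
      · exact ih v hp fun i hiT hji =>
          absurd (lt_of_le_of_lt hji i.isLt) (by omega)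
  intro v hp
  exact C k v hp fun i _ hik => absurd i.isLt (not_lt.2 hik)

theorem ml_ext {k : ℕ} (S : Set (Ω[R⁄ℤ])) (hS : Submodule.span R S = ⊤)
    (Φ Ψ : MultilinearMap R (fun _ : Fin k => Ω[R⁄ℤ]) M)
    (h : ∀ v : Fin k → Ω[R⁄ℤ], (∀ i, v i ∈ S) → Φ v = Ψ v) : Φ = Ψ :=
  MultilinearMap.ext fun v =>
    ml_ext_pinned S hS Φ Ψ ∅ v (fun w _ hw => h w fun i => hw i (Set.notMem_empty i))
      v (fun i hi => absurd hi (Set.notMem_empty i))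





/-- A map `Rᵏ → M` which is additive and satisfies the Leibniz rule in each slot. -/
def IsPD (k : ℕ) (g : (Fin k → R) → M) : Prop :=
  ∀ (r : Fin k → R) (i : Fin k) (a b : R),
    g (update r i (a + b)) = g (update r i a) + g (update r i b) ∧
      g (update r i (a * b)) = a • g (update r i b) + b • g (update r i a)

theorem IsPD.addfun {k : ℕ} {g₁ g₂ : (Fin k → R) → M} (h₁ : IsPD k g₁) (h₂ : IsPD k g₂) :
    IsPD k (fun r => g₁ r + g₂ r) := fun r i a b =>
  ⟨by dsimp only; rw [(h₁ r i a b).1, (h₂ r i a b).1]; abel,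
   by dsimp only; rw [(h₁ r i a b).2, (h₂ r i a b).2, smul_add, smul_add]; abel⟩

theorem IsPD.smulfun {k : ℕ} {g : (Fin k → R) → M} (h : IsPD k g) (c : R) :
    IsPD k (fun r => c • g r) := fun r i a b =>
  ⟨by dsimp only; rw [(h r i a b).1, smul_add],
   by dsimp only; rw [(h r i a b).2, smul_add, smul_comm c a, smul_comm c b]⟩

theorem IsPD.cons {k : ℕ} {g : (Fin (k + 1) → R) → M} (hg : IsPD (k + 1) g) (a : R) :
    IsPD k (fun v => g (Fin.cons a v)) := by
  intro v i c d
  dsimp only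
  simp only [Fin.cons_update]
  exact hg (Fin.cons a v) i.succ c d

/-- A map `R → M` which is additive and Leibniz is a `ℤ`-derivation. -/
noncomputable def pdDer (g : R → M)
    (h1 : ∀ a b : R, g (a + b) = g a + g b)
    (h2 : ∀ a b : R, g (a * b) = a • g b + b • g a) : Derivation ℤ R M where
  toLinearMap := (AddMonoidHom.mk' g h1).toIntLinearMap
  map_one_eq_zero' := by
    have h : g 1 = g 1 + g 1 := by simpa using h2 1 1
    simpa using (add_eq_left.mp h.symm)
  leibniz' := h2

@[simp] theorem pdDer_apply (g : R → M) (h1) (h2) (a : R) : pdDer g h1 h2 a = g a := rfl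

/-- Data of the iterated lift: a compatible family of lifts of poly-derivations to
multilinear maps on `Ω[R⁄ℤ]`. -/
structure LiftData (R : Type*) [CommRing R] (M : Type*) [AddCommGroup M] [Module R M]
    (k : ℕ) where
  L : (g : (Fin k → R) → M) → IsPD k g → MultilinearMap R (fun _ : Fin k => Ω[R⁄ℤ]) M
  spec : ∀ g hg (v : Fin k → R), L g hg (fun i => KaehlerDifferential.D ℤ R (v i)) = g v
  addP : ∀ g₁ g₂ h₁ h₂ h₁₂, L (fun r => g₁ r + g₂ r) h₁₂ = L g₁ h₁ + L g₂ h₂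
  smulP : ∀ (c : R) g hg hc, L (fun r => c • g r) hc = c • L g hg

theorem L_congr {k : ℕ} (P : LiftData R M k) {g₁ g₂ : (Fin k → R) → M} (h₁ : IsPD k g₁)
    (h₂ : IsPD k g₂) (h : g₁ = g₂) : P.L g₁ h₁ = P.L g₂ h₂ := by subst h; rfl

noncomputable def liftData (R : Type*) [CommRing R] (M : Type*) [AddCommGroup M]
    [Module R M] : ∀ k : ℕ, LiftData R M k
  | 0 =>
    { L := fun g _ => MultilinearMap.constOfIsEmpty R _ (g Fin.elim0)
      spec := fun g _ v => by
        simp only [MultilinearMap.constOfIsEmpty_apply]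
        exact congrArg g (Subsingleton.elim _ v)
      addP := fun g₁ g₂ h₁ h₂ h₁₂ => by ext v; simp
      smulP := fun c g hg hc => by ext v; simp }
  | k + 1 => by
    let prev := liftData R M k
    let E := KaehlerDifferential.linearMapEquivDerivation ℤ R
      (M := MultilinearMap R (fun _ : Fin k => Ω[R⁄ℤ]) M)
    let C := (multilinearCurryLeftEquiv R (fun _ : Fin (k + 1) => Ω[R⁄ℤ]) M).symm
    let Der : (g : (Fin (k + 1) → R) → M) → IsPD (k + 1) g →
        Derivation ℤ R (MultilinearMap R (fun _ : Fin k => Ω[R⁄ℤ]) M) := fun g hg =>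
      pdDer (fun a => prev.L (fun v => g (Fin.cons a v)) (hg.cons a))
        (fun a b => by
          have e : (fun v => g (Fin.cons (a + b) v)) =
              fun v => g (Fin.cons a v) + g (Fin.cons b v) := by
            funext v
            have h0 : ∀ x : R, (Fin.cons x v : Fin (k + 1) → R) =
                update (Fin.cons a v) 0 x := fun x => (@Fin.update_cons_zero k (fun _ => R) a v x).symm
            rw [h0 (a + b), h0 a, h0 b]
            simp only [Function.update_idem]
            exact (hg (Fin.cons a v) 0 a b).1
          exact (L_congr prev (hg.cons (a + b))
              ((hg.cons a).addfun (hg.cons b)) e).trans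
            (prev.addP (fun v => g (Fin.cons a v)) (fun v => g (Fin.cons b v))
              (hg.cons a) (hg.cons b) ((hg.cons a).addfun (hg.cons b))))
        (fun a b => by
          have e : (fun v => g (Fin.cons (a * b) v)) =
              fun v => a • g (Fin.cons b v) + b • g (Fin.cons a v) := by
            funext v
            have h0 : ∀ x : R, (Fin.cons x v : Fin (k + 1) → R) =
                update (Fin.cons a v) 0 x := fun x => (@Fin.update_cons_zero k (fun _ => R) a v x).symm
            rw [h0 (a * b), h0 a, h0 b]
            simp only [Function.update_idem]
            exact (hg (Fin.cons a v) 0 a b).2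
          exact (L_congr prev (hg.cons (a * b))
              (((hg.cons b).smulfun a).addfun ((hg.cons a).smulfun b)) e).trans
            ((prev.addP (fun v => a • g (Fin.cons b v)) (fun v => b • g (Fin.cons a v))
                ((hg.cons b).smulfun a) ((hg.cons a).smulfun b)
                (((hg.cons b).smulfun a).addfun ((hg.cons a).smulfun b))).trans
              (congrArg₂ (· + ·)
                (prev.smulP a _ (hg.cons b) ((hg.cons b).smulfun a))
                (prev.smulP b _ (hg.cons a) ((hg.cons a).smulfun b)))))
    exact
    { L := fun g hg => C (E.symm (Der g hg))
      spec := fun g hg v => by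
        show (E.symm (Der g hg)) (KaehlerDifferential.D ℤ R (v 0))
          (Fin.tail fun i => KaehlerDifferential.D ℤ R (v i)) = g v
        have h2 : (E.symm (Der g hg)) (KaehlerDifferential.D ℤ R (v 0)) = Der g hg (v 0) :=
          Derivation.liftKaehlerDifferential_comp_D (Der g hg) (v 0)
        rw [h2]
        exact (prev.spec (fun w => g (Fin.cons (v 0) w)) (hg.cons (v 0))
            (fun i => v i.succ)).trans (congrArg g (Fin.cons_self_tail v))
      addP := fun g₁ g₂ h₁ h₂ h₁₂ => by
        have hD : Der (fun r => g₁ r + g₂ r) h₁₂ = Der g₁ h₁ + Der g₂ h₂ :=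
          Derivation.ext fun a =>
            (L_congr prev (h₁₂.cons a) ((h₁.cons a).addfun (h₂.cons a)) rfl).trans
              (prev.addP (fun v => g₁ (Fin.cons a v)) (fun v => g₂ (Fin.cons a v))
                (h₁.cons a) (h₂.cons a) ((h₁.cons a).addfun (h₂.cons a)))
        show C (E.symm (Der (fun r => g₁ r + g₂ r) h₁₂)) =
          C (E.symm (Der g₁ h₁)) + C (E.symm (Der g₂ h₂))
        rw [hD, map_add, map_add]
      smulP := fun c g hg hc => by
        have hD : Der (fun r => c • g r) hc = c • Der g hg :=
          Derivation.ext fun a =>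
            (L_congr prev (hc.cons a) ((hg.cons a).smulfun c) rfl).trans
              (prev.smulP c (fun v => g (Fin.cons a v)) (hg.cons a) ((hg.cons a).smulfun c))
        show C (E.symm (Der (fun r => c • g r) hc)) = c • C (E.symm (Der g hg))
        rw [hD, map_smul, map_smul] }





theorem update_comp_swap {α : Type*} (r : Fin n → α) (i j : Fin n) (hij : i ≠ j) (x : α) :
    (update r j x) ∘ Equiv.swap i j = update (r ∘ Equiv.swap i j) i x := by
  funext t
  show update r j x (Equiv.swap i j t) = update (r ∘ Equiv.swap i j) i x t
  by_cases hti : t = i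
  · subst hti
    rw [Equiv.swap_apply_left, update_self, update_self]
  · by_cases htj : t = j
    · subst htj
      rw [Equiv.swap_apply_right, update_of_ne hij, update_of_ne hti, comp_apply,
        Equiv.swap_apply_right]
    · rw [Equiv.swap_apply_of_ne_of_ne hti htj, update_of_ne htj, update_of_ne hti,
        comp_apply, Equiv.swap_apply_of_ne_of_ne hti htj]

section Stage1

variable (f : (Fin n → Rˣ) → M)

/-- Transport of the additivity hypothesis to any slot. -/
theorem hadd_slot
    (halt_swap : ∀ (r : Fin n → Rˣ) (i j : Fin n), (i : ℕ) + 1 = (j : ℕ) →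
      f (r ∘ Equiv.swap i j) = - f r)
    (hadd : ∀ (hn : 0 < n) (N : ℕ), 2 ≤ N → ∀ (a : Fin N → Rˣ) (r : Fin n → Rˣ),
      (∑ j, (a j : R)) = 0 → ∑ j, f (Function.update r ⟨0, hn⟩ (a j)) = 0) :
    ∀ (i : Fin n) (N : ℕ), 2 ≤ N → ∀ (a : Fin N → Rˣ) (r : Fin n → Rˣ),
      (∑ j, (a j : R)) = 0 → (∑ j, f (update r i (a j))) = 0 := by
  have key : ∀ (m : ℕ) (hm : m + 1 < n) (r : Fin n → Rˣ) (x : Rˣ),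
      f (update r ⟨m + 1, hm⟩ x) =
        - f (update (r ∘ Equiv.swap ⟨m, by omega⟩ ⟨m + 1, hm⟩) ⟨m, by omega⟩ x) := by
    intro m hm r x
    have hij : (⟨m, by omega⟩ : Fin n) ≠ ⟨m + 1, hm⟩ := by simp [Fin.ext_iff]
    have hs := halt_swap (update r ⟨m + 1, hm⟩ x) ⟨m, by omega⟩ ⟨m + 1, hm⟩ rfl
    rw [update_comp_swap r ⟨m, by omega⟩ ⟨m + 1, hm⟩ hij x] at hs
    rw [hs, neg_neg]
  suffices h : ∀ (m : ℕ) (hm : m < n) (N : ℕ), 2 ≤ N → ∀ (a : Fin N → Rˣ) (r : Fin n → Rˣ),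
      (∑ j, (a j : R)) = 0 → (∑ j, f (update r ⟨m, hm⟩ (a j))) = 0 by
    intro i
    exact h i.1 i.2
  intro m
  induction m with
  | zero => intro hm N hN a r hsum; exact hadd hm N hN a r hsum
  | succ m ih =>
    intro hm N hN a r hsum
    have hm' : m < n := by omega
    have e : ∀ j, f (update r ⟨m + 1, hm⟩ (a j)) =
        - f (update (r ∘ Equiv.swap ⟨m, hm'⟩ ⟨m + 1, hm⟩) ⟨m, hm'⟩ (a j)) := fun j =>
      key m hm r (a j)
    rw [Finset.sum_congr rfl fun j _ => e j, Finset.sum_neg_distrib,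
      ih hm' N hN a _ hsum, neg_zero]

/-- Transport of the Leibniz hypothesis to any slot. -/
theorem hleib_slot
    (halt_swap : ∀ (r : Fin n → Rˣ) (i j : Fin n), (i : ℕ) + 1 = (j : ℕ) →
      f (r ∘ Equiv.swap i j) = - f r)
    (hleib : ∀ (hn : 0 < n) (r : Fin n → Rˣ) (u v : Rˣ), r ⟨0, hn⟩ = u * v →
      f r = (u : R) • f (Function.update r ⟨0, hn⟩ v)
          + (v : R) • f (Function.update r ⟨0, hn⟩ u)) :
    ∀ (i : Fin n) (r : Fin n → Rˣ) (u v : Rˣ),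
      f (update r i (u * v)) = (u : R) • f (update r i v) + (v : R) • f (update r i u) := by
  have key : ∀ (m : ℕ) (hm : m + 1 < n) (r : Fin n → Rˣ) (x : Rˣ),
      f (update r ⟨m + 1, hm⟩ x) =
        - f (update (r ∘ Equiv.swap ⟨m, by omega⟩ ⟨m + 1, hm⟩) ⟨m, by omega⟩ x) := by
    intro m hm r x
    have hij : (⟨m, by omega⟩ : Fin n) ≠ ⟨m + 1, hm⟩ := by simp [Fin.ext_iff]
    have hs := halt_swap (update r ⟨m + 1, hm⟩ x) ⟨m, by omega⟩ ⟨m + 1, hm⟩ rfl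
    rw [update_comp_swap r ⟨m, by omega⟩ ⟨m + 1, hm⟩ hij x] at hs
    rw [hs, neg_neg]
  suffices h : ∀ (m : ℕ) (hm : m < n) (r : Fin n → Rˣ) (u v : Rˣ),
      f (update r ⟨m, hm⟩ (u * v)) =
        (u : R) • f (update r ⟨m, hm⟩ v) + (v : R) • f (update r ⟨m, hm⟩ u) by
    intro i
    exact h i.1 i.2
  intro m
  induction m with
  | zero =>
    intro hm r u v
    have h := hleib hm (update r ⟨0, hm⟩ (u * v)) u v (update_self _ _ _)
    rwa [update_idem, update_idem] at h
  | succ m ih =>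
    intro hm r u v
    have hm' : m < n := by omega
    rw [key m hm r (u * v), key m hm r v, key m hm r u, ih hm', smul_neg, smul_neg,
      neg_add]

/-- Invariance of sums of `f`-values over unit decompositions with equal total sum. -/
theorem f_inv
    (haddS : ∀ (i : Fin n) (N : ℕ), 2 ≤ N → ∀ (a : Fin N → Rˣ) (r : Fin n → Rˣ),
      (∑ j, (a j : R)) = 0 → (∑ j, f (update r i (a j))) = 0) :
    ∀ (i : Fin n) (N K : ℕ), N ≠ 0 → K ≠ 0 → ∀ (a : Fin N → Rˣ) (b : Fin K → Rˣ),
      (∑ t, (a t : R)) = (∑ t, (b t : R)) → ∀ r : Fin n → Rˣ,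
      (∑ t, f (update r i (a t))) = ∑ t, f (update r i (b t)) := by
  intro i N K hN hK a b hsum r
  have hneg : ∀ u : Rˣ, f (update r i (-u)) = - f (update r i u) := by
    intro u
    have h := haddS i 2 le_rfl ![u, -u] r (by
      rw [Fin.sum_univ_two]
      simp)
    rw [Fin.sum_univ_two] at h
    simp only [Matrix.cons_val_zero, Matrix.cons_val_one, Matrix.head_cons] at h
    exact eq_neg_of_add_eq_zero_right h
  set c : Fin (N + K) → Rˣ := Fin.append a (fun t => -(b t)) with hcdef
  have hc : (∑ t, (c t : R)) = 0 := by
    rw [Fin.sum_univ_add]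
    have h1 : ∀ t : Fin N, ((c (Fin.castAdd K t) : R)) = (a t : R) := fun t => by
      simp [hcdef, Fin.append_left]
    have h2 : ∀ t : Fin K, ((c (Fin.natAdd N t) : R)) = -(b t : R) := fun t => by
      simp [hcdef, Fin.append_right]
    rw [Finset.sum_congr rfl fun t _ => h1 t, Finset.sum_congr rfl fun t _ => h2 t,
      Finset.sum_neg_distrib, hsum, add_neg_cancel]
  have h0 := haddS i (N + K) (by omega) c r hc
  rw [Fin.sum_univ_add] at h0
  have h1 : ∀ t : Fin N, f (update r i (c (Fin.castAdd K t))) = f (update r i (a t)) :=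
    fun t => by rw [show c (Fin.castAdd K t) = a t from Fin.append_left a _ t]
  have h2 : ∀ t : Fin K, f (update r i (c (Fin.natAdd N t))) = - f (update r i (b t)) :=
    fun t => by
      rw [show c (Fin.natAdd N t) = -(b t) from Fin.append_right a _ t]
      exact hneg (b t)
  rw [Finset.sum_congr rfl fun t _ => h1 t, Finset.sum_congr rfl fun t _ => h2 t,
    Finset.sum_neg_distrib] at h0
  exact add_neg_eq_zero.mp h0

variable (U V : R → Rˣ)

/-- Iterated extension of `f` using unit decompositions `a = U a + V a`:
`Gfun k r w` evaluates `f` with slots `< k` given by decomposing the ring elements `r i`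
and slots `≥ k` given by the units `w i`. -/
noncomputable def Gfun : ℕ → (Fin n → R) → (Fin n → Rˣ) → M
  | 0, _, w => f w
  | k + 1, r, w =>
    if h : k < n then
      Gfun k r (update w ⟨k, h⟩ (U (r ⟨k, h⟩))) + Gfun k r (update w ⟨k, h⟩ (V (r ⟨k, h⟩)))
    else Gfun k r w

/-- `Gfun k` only depends on the slots `< k` of its first argument. -/
theorem G_irrel : ∀ (k : ℕ) (r r' : Fin n → R) (w : Fin n → Rˣ),
    (∀ i : Fin n, (i : ℕ) < k → r i = r' i) → Gfun f U V k r w = Gfun f U V k r' w := by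
  intro k
  induction k with
  | zero => intro r r' w _; rfl
  | succ k ih =>
    intro r r' w h
    by_cases hk : k < n
    · simp only [Gfun, dif_pos hk]
      rw [h ⟨k, hk⟩ (by simp), ih r r' _ fun i hi => h i (by omega),
        ih r r' _ fun i hi => h i (by omega)]
    · simp only [Gfun, dif_neg hk]
      exact ih r r' w fun i hi => h i (by omega)

/-- Invariance of `Gfun` under unit decompositions in a not-yet-consumed `w`-slot. -/
theorem G_winv
    (hinv : ∀ (i : Fin n) (N K : ℕ), N ≠ 0 → K ≠ 0 → ∀ (a : Fin N → Rˣ) (b : Fin K → Rˣ),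
      (∑ t, (a t : R)) = (∑ t, (b t : R)) → ∀ r : Fin n → Rˣ,
      (∑ t, f (update r i (a t))) = ∑ t, f (update r i (b t))) :
    ∀ (k : ℕ) (j : Fin n), k ≤ (j : ℕ) → ∀ (N K : ℕ), N ≠ 0 → K ≠ 0 →
      ∀ (a : Fin N → Rˣ) (b : Fin K → Rˣ), (∑ t, (a t : R)) = (∑ t, (b t : R)) →
      ∀ (r : Fin n → R) (w : Fin n → Rˣ),
      (∑ t, Gfun f U V k r (update w j (a t))) = ∑ t, Gfun f U V k r (update w j (b t)) := by
  intro k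
  induction k with
  | zero => intro j _ N K hN hK a b hs r w; exact hinv j N K hN hK a b hs w
  | succ k ih =>
    intro j hj N K hN hK a b hs r w
    have hk : k < n := by omega
    have hkj : (⟨k, hk⟩ : Fin n) ≠ j := Fin.ne_of_val_ne (show k ≠ (j : ℕ) by omega)
    have hcomm : ∀ (x u : Rˣ), update (update w j x) ⟨k, hk⟩ u =
        update (update w ⟨k, hk⟩ u) j x := fun x u =>
      Function.update_comm hkj.symm x u w
    simp only [Gfun, dif_pos hk, hcomm]
    rw [Finset.sum_add_distrib, Finset.sum_add_distrib,
      ih j (by omega) N K hN hK a b hs r _, ih j (by omega) N K hN hK a b hs r _]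

/-- Leibniz rule for `Gfun` in a not-yet-consumed `w`-slot. -/
theorem G_lw
    (hlei : ∀ (i : Fin n) (r : Fin n → Rˣ) (u v : Rˣ),
      f (update r i (u * v)) = (u : R) • f (update r i v) + (v : R) • f (update r i u)) :
    ∀ (k : ℕ) (j : Fin n), k ≤ (j : ℕ) → ∀ (u v : Rˣ) (r : Fin n → R) (w : Fin n → Rˣ),
      Gfun f U V k r (update w j (u * v)) =
        (u : R) • Gfun f U V k r (update w j v) + (v : R) • Gfun f U V k r (update w j u) := by
  intro k
  induction k with
  | zero => intro j _ u v r w; exact hlei j w u v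
  | succ k ih =>
    intro j hj u v r w
    have hk : k < n := by omega
    have hkj : (⟨k, hk⟩ : Fin n) ≠ j := Fin.ne_of_val_ne (show k ≠ (j : ℕ) by omega)
    have hcomm : ∀ (x u' : Rˣ), update (update w j x) ⟨k, hk⟩ u' =
        update (update w ⟨k, hk⟩ u') j x := fun x u' =>
      Function.update_comm hkj.symm x u' w
    simp only [Gfun, dif_pos hk, hcomm]
    rw [ih j (by omega) u v r _, ih j (by omega) u v r _, smul_add, smul_add]
    abel

/-- `Gfun` on tuples of units. -/
theorem G_spec (hUV : ∀ a : R, a = (U a : R) + (V a : R))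
    (hinv : ∀ (i : Fin n) (N K : ℕ), N ≠ 0 → K ≠ 0 → ∀ (a : Fin N → Rˣ) (b : Fin K → Rˣ),
      (∑ t, (a t : R)) = (∑ t, (b t : R)) → ∀ r : Fin n → Rˣ,
      (∑ t, f (update r i (a t))) = ∑ t, f (update r i (b t))) :
    ∀ k : ℕ, k ≤ n → ∀ (u : Fin n → Rˣ) (w : Fin n → Rˣ),
      Gfun f U V k (fun i => (u i : R)) w =
        f (fun i => if (i : ℕ) < k then u i else w i) := by
  intro k
  induction k with
  | zero =>
    intro _ u w
    exact congrArg f (funext fun i => by simp)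
  | succ k ih =>
    intro hkn u w
    have hk : k < n := by omega
    simp only [Gfun, dif_pos hk]
    rw [ih (by omega) u _, ih (by omega) u _]
    have hmerge : ∀ x : Rˣ,
        (fun i : Fin n => if (i : ℕ) < k then u i else (update w ⟨k, hk⟩ x) i) =
          update (fun i : Fin n => if (i : ℕ) < k then u i else w i) ⟨k, hk⟩ x := by
      intro x
      funext i
      by_cases hik : i = (⟨k, hk⟩ : Fin n)
      · subst hik
        simp
      · simp [Function.update_of_ne hik]
    rw [hmerge, hmerge]
    have key := hinv ⟨k, hk⟩ 2 1 (by omega) (by omega)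
      ![U ((u ⟨k, hk⟩ : Rˣ) : R), V ((u ⟨k, hk⟩ : Rˣ) : R)] ![u ⟨k, hk⟩]
      (by
        rw [Fin.sum_univ_two, Fin.sum_univ_one]
        simp only [Matrix.cons_val_zero, Matrix.cons_val_one, Matrix.head_cons]
        exact (hUV _).symm)
      (fun i => if (i : ℕ) < k then u i else w i)
    rw [Fin.sum_univ_two, Fin.sum_univ_one] at key
    simp only [Matrix.cons_val_zero, Matrix.cons_val_one, Matrix.head_cons] at key
    rw [key]
    refine congrArg f (funext fun i => ?_)
    by_cases hik : i = (⟨k, hk⟩ : Fin n)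
    · subst hik
      simp
    · have hv : (i : ℕ) ≠ k := fun h => hik (Fin.val_injective h)
      rw [update_of_ne hik]
      by_cases hlt : (i : ℕ) < k
      · rw [if_pos hlt, if_pos (by omega)]
      · rw [if_neg hlt, if_neg (by omega)]

/-- Additivity of `Gfun` in an already-consumed slot. -/
theorem G_add (hUV : ∀ a : R, a = (U a : R) + (V a : R))
    (hinv : ∀ (i : Fin n) (N K : ℕ), N ≠ 0 → K ≠ 0 → ∀ (a : Fin N → Rˣ) (b : Fin K → Rˣ),
      (∑ t, (a t : R)) = (∑ t, (b t : R)) → ∀ r : Fin n → Rˣ,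
      (∑ t, f (update r i (a t))) = ∑ t, f (update r i (b t))) :
    ∀ (k : ℕ) (j : Fin n), (j : ℕ) < k → ∀ (r : Fin n → R) (w : Fin n → Rˣ) (a b : R),
      Gfun f U V k (update r j (a + b)) w =
        Gfun f U V k (update r j a) w + Gfun f U V k (update r j b) w := by
  intro k
  induction k with
  | zero => intro j hj; omega
  | succ k ih =>
    intro j hj r w a b
    by_cases hjk : (j : ℕ) < k
    · by_cases hk : k < n
      · have hne : (⟨k, hk⟩ : Fin n) ≠ j := Fin.ne_of_val_ne (show k ≠ (j : ℕ) by omega)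
        simp only [Gfun, dif_pos hk, update_of_ne hne]
        rw [ih j hjk r _ a b, ih j hjk r _ a b]
        abel
      · simp only [Gfun, dif_neg hk]
        exact ih j hjk r w a b
    · have hjv : (j : ℕ) = k := by omega
      have hk : k < n := hjv ▸ j.isLt
      have hupd : ∀ (c : R) (h' : k < n), update r j c ⟨k, h'⟩ = c := fun c h' => by
        rw [show (⟨k, h'⟩ : Fin n) = j from Fin.val_injective hjv.symm, update_self]
      have hupdw : ∀ (x : Rˣ) (h' : k < n) (w' : Fin n → Rˣ),
          update w' ⟨k, h'⟩ x = update w' j x := fun x h' w' => by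
        rw [show (⟨k, h'⟩ : Fin n) = j from Fin.val_injective hjv.symm]
      simp only [Gfun, dif_pos hk, hupd, hupdw]
      have hir : ∀ (c : R) (w' : Fin n → Rˣ),
          Gfun f U V k (update r j c) w' = Gfun f U V k r w' := fun c w' =>
        G_irrel f U V k _ r w' fun i hi =>
          update_of_ne (Fin.ne_of_val_ne (show (i : ℕ) ≠ (j : ℕ) by omega)) c r
      simp only [hir]
      have key := G_winv f U V hinv k j (le_of_eq hjv.symm) 2 4 (by omega) (by omega)
        ![U (a + b), V (a + b)] ![U a, V a, U b, V b]
        (by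
          rw [Fin.sum_univ_two, Fin.sum_univ_four]
          simp only [Matrix.cons_val_zero, Matrix.cons_val_one, Matrix.head_cons,
            Matrix.cons_val_two, Matrix.cons_val_three, Matrix.tail_cons]
          conv_lhs => rw [← hUV (a + b)]
          conv_rhs => rw [show (U a : R) + V a + U b + V b =
            ((U a : R) + V a) + ((U b : R) + V b) by ring, ← hUV a, ← hUV b])
        r w
      rw [Fin.sum_univ_two, Fin.sum_univ_four] at key
      simp only [Matrix.cons_val_zero, Matrix.cons_val_one, Matrix.head_cons,
        Matrix.cons_val_two, Matrix.cons_val_three, Matrix.tail_cons] at key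
      rw [key]
      abel

/-- Leibniz rule for `Gfun` in an already-consumed slot. -/
theorem G_leib (hUV : ∀ a : R, a = (U a : R) + (V a : R))
    (hinv : ∀ (i : Fin n) (N K : ℕ), N ≠ 0 → K ≠ 0 → ∀ (a : Fin N → Rˣ) (b : Fin K → Rˣ),
      (∑ t, (a t : R)) = (∑ t, (b t : R)) → ∀ r : Fin n → Rˣ,
      (∑ t, f (update r i (a t))) = ∑ t, f (update r i (b t)))
    (hlei : ∀ (i : Fin n) (r : Fin n → Rˣ) (u v : Rˣ),
      f (update r i (u * v)) = (u : R) • f (update r i v) + (v : R) • f (update r i u)) :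
    ∀ (k : ℕ) (j : Fin n), (j : ℕ) < k → ∀ (r : Fin n → R) (w : Fin n → Rˣ) (a b : R),
      Gfun f U V k (update r j (a * b)) w =
        a • Gfun f U V k (update r j b) w + b • Gfun f U V k (update r j a) w := by
  intro k
  induction k with
  | zero => intro j hj; omega
  | succ k ih =>
    intro j hj r w a b
    by_cases hjk : (j : ℕ) < k
    · by_cases hk : k < n
      · have hne : (⟨k, hk⟩ : Fin n) ≠ j := Fin.ne_of_val_ne (show k ≠ (j : ℕ) by omega)
        simp only [Gfun, dif_pos hk, update_of_ne hne]
        rw [ih j hjk r _ a b, ih j hjk r _ a b, smul_add, smul_add]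
        abel
      · simp only [Gfun, dif_neg hk]
        exact ih j hjk r w a b
    · have hjv : (j : ℕ) = k := by omega
      have hk : k < n := hjv ▸ j.isLt
      have hupd : ∀ (c : R) (h' : k < n), update r j c ⟨k, h'⟩ = c := fun c h' => by
        rw [show (⟨k, h'⟩ : Fin n) = j from Fin.val_injective hjv.symm, update_self]
      have hupdw : ∀ (x : Rˣ) (h' : k < n) (w' : Fin n → Rˣ),
          update w' ⟨k, h'⟩ x = update w' j x := fun x h' w' => by
        rw [show (⟨k, h'⟩ : Fin n) = j from Fin.val_injective hjv.symm]
      simp only [Gfun, dif_pos hk, hupd, hupdw]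
      have hir : ∀ (c : R) (w' : Fin n → Rˣ),
          Gfun f U V k (update r j c) w' = Gfun f U V k r w' := fun c w' =>
        G_irrel f U V k _ r w' fun i hi =>
          update_of_ne (Fin.ne_of_val_ne (show (i : ℕ) ≠ (j : ℕ) by omega)) c r
      simp only [hir]
      have key := G_winv f U V hinv k j (le_of_eq hjv.symm) 2 4 (by omega) (by omega)
        ![U (a * b), V (a * b)] ![U a * U b, U a * V b, V a * U b, V a * V b]
        (by
          rw [Fin.sum_univ_two, Fin.sum_univ_four]
          simp only [Matrix.cons_val_zero, Matrix.cons_val_one, Matrix.head_cons,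
            Matrix.cons_val_two, Matrix.cons_val_three, Matrix.tail_cons, Units.val_mul]
          conv_lhs => rw [← hUV (a * b)]
          conv_rhs => rw [show (U a : R) * U b + (U a : R) * V b + (V a : R) * U b
              + (V a : R) * V b = ((U a : R) + V a) * ((U b : R) + V b) by ring,
            ← hUV a, ← hUV b])
        r w
      rw [Fin.sum_univ_two, Fin.sum_univ_four] at key
      simp only [Matrix.cons_val_zero, Matrix.cons_val_one, Matrix.head_cons,
        Matrix.cons_val_two, Matrix.cons_val_three, Matrix.tail_cons] at key
      rw [key, G_lw f U V hlei k j (le_of_eq hjv.symm) (U a) (U b) r w,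
        G_lw f U V hlei k j (le_of_eq hjv.symm) (U a) (V b) r w,
        G_lw f U V hlei k j (le_of_eq hjv.symm) (V a) (U b) r w,
        G_lw f U V hlei k j (le_of_eq hjv.symm) (V a) (V b) r w]
      have ea : a • Gfun f U V k r (update w j (U b)) + a • Gfun f U V k r (update w j (V b))
          = (U a : R) • Gfun f U V k r (update w j (U b))
            + (V a : R) • Gfun f U V k r (update w j (U b))
            + ((U a : R) • Gfun f U V k r (update w j (V b))
            + (V a : R) • Gfun f U V k r (update w j (V b))) := by
        rw [← add_smul, ← add_smul, ← hUV a]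
      have eb : b • Gfun f U V k r (update w j (U a)) + b • Gfun f U V k r (update w j (V a))
          = (U b : R) • Gfun f U V k r (update w j (U a))
            + (V b : R) • Gfun f U V k r (update w j (U a))
            + ((U b : R) • Gfun f U V k r (update w j (V a))
            + (V b : R) • Gfun f U V k r (update w j (V a))) := by
        rw [← add_smul, ← add_smul, ← hUV b]
      rw [smul_add, smul_add, ea, eb]
      abel

end Stage1


end Stmt16Aux

open Stmt16Aux


/-- let `R` be a ring in which every element is a sum of two units
(weak 2-fold stability), `M` an `R`-module and `f : (Rˣ)^n → M` a map which is
alternating, satisfies the Leibniz rule in the first variable, and is additively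
multilinear in the first variable. Then there is a unique `R`-linear map
`F : Ω^n_R → M` with `F(s·dr₁ ∧ … ∧ dr_n) = s·f(r₁, …, r_n)`. -/
theorem stmt_16 (R : Type*) [CommRing R] (n : ℕ)
    (hstab : ∀ a : R, ∃ u v : Rˣ, a = (u : R) + (v : R))
    (M : Type*) [AddCommGroup M] [Module R M] (f : (Fin n → Rˣ) → M)
    -- (i) alternating: swapping two adjacent arguments negates the value …
    (halt_swap : ∀ (r : Fin n → Rˣ) (i j : Fin n), (i : ℕ) + 1 = (j : ℕ) →
      f (r ∘ Equiv.swap i j) = - f r)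
    -- … and the value is `0` if two adjacent arguments coincide
    (halt_eq : ∀ (r : Fin n → Rˣ) (i j : Fin n), (i : ℕ) + 1 = (j : ℕ) →
      r i = r j → f r = 0)
    -- (ii) Leibniz rule in the first variable
    (hleib : ∀ (hn : 0 < n) (r : Fin n → Rˣ) (u v : Rˣ), r ⟨0, hn⟩ = u * v →
      f r = (u : R) • f (Function.update r ⟨0, hn⟩ v)
          + (v : R) • f (Function.update r ⟨0, hn⟩ u))
    -- (iii) additive multilinearity in the first variable
    (hadd : ∀ (hn : 0 < n) (N : ℕ), 2 ≤ N → ∀ (a : Fin N → Rˣ) (r : Fin n → Rˣ),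
      (∑ j, (a j : R)) = 0 → ∑ j, f (Function.update r ⟨0, hn⟩ (a j)) = 0) :
    ∃! F : (⋀[R]^n (Ω[R⁄ℤ])) →ₗ[R] M,
      ∀ (s : R) (r : Fin n → Rˣ), F (wedgeD R n s r) = s • f r := by

  classical
  choose U V hUV using hstab
  have haddS := hadd_slot f halt_swap hadd
  have hleiS := hleib_slot f halt_swap hleib
  have hinv := f_inv f haddS
  set g : (Fin n → R) → M := fun r => Gfun f U V n r (fun _ => 1) with hgdef
  have hgPD : IsPD n g := fun r i a b =>
    ⟨G_add f U V hUV hinv n i i.isLt r _ a b,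
     G_leib f U V hUV hinv hleiS n i i.isLt r _ a b⟩
  have hgval : ∀ u : Fin n → Rˣ, g (fun i => (u i : R)) = f u := by
    intro u
    rw [hgdef]
    dsimp only
    rw [G_spec f U V hUV hinv n le_rfl u _]
    exact congrArg f (funext fun i => if_pos i.isLt)
  set Φ := (liftData R M n).L g hgPD with hΦdef
  have hΦspec : ∀ v : Fin n → R, Φ (fun i => KaehlerDifferential.D ℤ R (v i)) = g v :=
    (liftData R M n).spec g hgPD
  have hΦunits : ∀ u : Fin n → Rˣ,
      Φ (fun i => KaehlerDifferential.D ℤ R ((u i : R))) = f u :=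
    fun u => (hΦspec fun i => (u i : R)).trans (hgval u)
  set S : Set (Ω[R⁄ℤ]) := Set.range (fun u : Rˣ => KaehlerDifferential.D ℤ R (u : R)) with hSdef
  have hS : Submodule.span R S = ⊤ := by
    rw [eq_top_iff, ← KaehlerDifferential.span_range_derivation]
    refine Submodule.span_le.2 ?_
    rintro _ ⟨a, rfl⟩
    have hda : KaehlerDifferential.D ℤ R a =
        KaehlerDifferential.D ℤ R ((U a : R)) + KaehlerDifferential.D ℤ R ((V a : R)) := by
      conv_lhs => rw [hUV a]
      exact map_add _ _ _
    rw [hda]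
    exact Submodule.add_mem _ (Submodule.subset_span ⟨U a, rfl⟩)
      (Submodule.subset_span ⟨V a, rfl⟩)
  -- (α) adjacent antisymmetry for all tuples
  have halpha : ∀ (i j : Fin n), (i : ℕ) + 1 = (j : ℕ) → ∀ v : Fin n → Ω[R⁄ℤ],
      Φ (fun t => v (Equiv.swap i j t)) = - Φ v := by
    intro i j hij
    have hml : Φ.domDomCongr (Equiv.swap i j) = - Φ := by
      refine ml_ext S hS _ _ ?_
      intro v hv
      choose c hc using fun t => Set.mem_range.mp (hv t)
      have hveq : v = fun t => KaehlerDifferential.D ℤ R ((c t : R)) :=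
        funext fun t => (hc t).symm
      rw [MultilinearMap.domDomCongr_apply, MultilinearMap.neg_apply, hveq]
      calc Φ (fun t => (fun t' => KaehlerDifferential.D ℤ R ((c t' : R))) (Equiv.swap i j t))
          = f (c ∘ Equiv.swap i j) := hΦunits (c ∘ Equiv.swap i j)
        _ = - f c := halt_swap c i j hij
        _ = - Φ (fun t => KaehlerDifferential.D ℤ R ((c t : R))) := by rw [hΦunits c]
    intro v
    have := congrArg (fun Ψ : MultilinearMap R (fun _ : Fin n => Ω[R⁄ℤ]) M => Ψ v) hml
    simpa [MultilinearMap.domDomCongr_apply] using this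
  -- (β) vanishing on adjacent equal slots
  have hbeta : ∀ (i j : Fin n), (i : ℕ) + 1 = (j : ℕ) → ∀ v : Fin n → Ω[R⁄ℤ],
      v i = v j → Φ v = 0 := by
    intro i j hij v hvij
    have hijne : i ≠ j := Fin.ne_of_val_ne (by omega)
    have hDvanish : ∀ (u : Rˣ) (w : Fin n → Ω[R⁄ℤ]),
        w i = KaehlerDifferential.D ℤ R ((u : R)) →
        w j = KaehlerDifferential.D ℤ R ((u : R)) → Φ w = 0 := by
      intro u w hwi hwj
      have h0 := ml_ext_pinned S hS Φ 0 ({i, j} : Set (Fin n))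
        (fun _ => KaehlerDifferential.D ℤ R ((u : R)))
        (fun w' hpin hmem => ?_) w (fun t ht => ?_)
      · simpa using h0
      · set c : Fin n → Rˣ := fun t =>
          if h : t ∈ ({i, j} : Set (Fin n)) then u
          else Classical.choose (Set.mem_range.mp (hmem t h)) with hcdef
        have hcc : ∀ t, KaehlerDifferential.D ℤ R ((c t : R)) = w' t := by
          intro t
          by_cases h : t ∈ ({i, j} : Set (Fin n))
          · rw [show c t = u from by rw [hcdef]; exact dif_pos h, hpin t h]
          · rw [show c t = Classical.choose (Set.mem_range.mp (hmem t h)) from by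
              rw [hcdef]; exact dif_neg h]
            exact Classical.choose_spec (Set.mem_range.mp (hmem t h))
        have hw' : w' = fun t => KaehlerDifferential.D ℤ R ((c t : R)) :=
          funext fun t => (hcc t).symm
        rw [hw', hΦunits c]
        have hci : c i = u := by rw [hcdef]; exact dif_pos (Set.mem_insert i {j})
        have hcj : c j = u := by
          rw [hcdef]
          exact dif_pos (Set.mem_insert_of_mem i (Set.mem_singleton j))
        have hres := halt_eq c i j hij (hci.trans hcj.symm)
        simpa using hres
      · rcases ht with ht | ht
        · rw [ht]; exact hwi
        · rw [Set.mem_singleton_iff.mp ht]; exact hwj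
    have hcomm : ∀ (z z' : Ω[R⁄ℤ]),
        update (update v i z) j z' = update (update v j z') i z := fun z z' =>
      Function.update_comm hijne z z' v
    have key : ∀ x ∈ Submodule.span R S, Φ (update (update v i x) j x) = 0 := by
      intro x hx
      induction hx using Submodule.span_induction with
      | mem x hxS =>
        obtain ⟨u, hu⟩ := Set.mem_range.mp hxS
        refine hDvanish u _ ?_ ?_
        · rw [update_of_ne hijne, update_self]
          exact hu.symm
        · rw [update_self]
          exact hu.symm
      | zero => exact Φ.map_coord_zero j (update_self _ _ _)
      | add x y hxm hym hx hy =>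
        rw [Φ.map_update_add (update v i (x + y)) j x y, hcomm (x + y) x, hcomm (x + y) y,
          Φ.map_update_add (update v j x) i x y, Φ.map_update_add (update v j y) i x y,
          ← hcomm x x, ← hcomm y x, ← hcomm x y, ← hcomm y y, hx, hy]
        have hcross : Φ (update (update v i x) j y) = - Φ (update (update v i y) j x) := by
          have hsw := halpha i j hij (update (update v i y) j x)
          have heq : (fun t => (update (update v i y) j x) (Equiv.swap i j t)) =
              update (update v i x) j y := by
            funext t
            by_cases hti : t = i
            · subst hti
              rw [Equiv.swap_apply_left, update_self, update_of_ne hijne, update_self]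
            · by_cases htj : t = j
              · subst htj
                rw [Equiv.swap_apply_right, update_of_ne hijne, update_self, update_self]
              · rw [Equiv.swap_apply_of_ne_of_ne hti htj, update_of_ne htj, update_of_ne hti,
                  update_of_ne htj, update_of_ne hti]
          rw [heq] at hsw
          exact hsw
        rw [hcross]
        abel
      | smul c x hxm hx =>
        rw [Φ.map_update_smul (update v i (c • x)) j c x, hcomm (c • x) x,
          Φ.map_update_smul (update v j x) i c x, ← hcomm x x, hx, smul_zero, smul_zero]
    have hfin := key (v i) (by rw [hS]; trivial)
    have hveq : update (update v i (v i)) j (v i) = v := by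
      funext t
      by_cases htj : t = j
      · subst htj
        rw [update_self, hvij]
      · rw [update_of_ne htj]
        by_cases hti : t = i
        · subst hti
          rw [update_self]
        · rw [update_of_ne hti]
    rwa [hveq] at hfin
  -- (γ) full alternation
  have hgamma : ∀ (v : Fin n → Ω[R⁄ℤ]) (i j : Fin n), v i = v j → i ≠ j → Φ v = 0 := by
    have main : ∀ (d : ℕ) (i j : Fin n), (j : ℕ) = (i : ℕ) + d + 1 →
        ∀ v : Fin n → Ω[R⁄ℤ], v i = v j → Φ v = 0 := by
      intro d
      induction d with
      | zero => intro i j hij v hv; exact hbeta i j (by omega) v hv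
      | succ d ih =>
        intro i j hij v hv
        have hj' : (i : ℕ) + d + 1 < n := by have := j.isLt; omega
        set j' : Fin n := ⟨(i : ℕ) + d + 1, hj'⟩ with hj'def
        have hadj : (j' : ℕ) + 1 = (j : ℕ) := by
          show (i : ℕ) + d + 1 + 1 = (j : ℕ)
          omega
        have hsw := halpha j' j hadj v
        have hww : (fun t => v (Equiv.swap j' j t)) i = (fun t => v (Equiv.swap j' j t)) j' := by
          have hij' : i ≠ j' := Fin.ne_of_val_ne (show (i : ℕ) ≠ (i : ℕ) + d + 1 by omega)
          have hijj : i ≠ j := Fin.ne_of_val_ne (by omega)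
          dsimp only
          rw [Equiv.swap_apply_of_ne_of_ne hij' hijj, Equiv.swap_apply_left]
          exact hv
        have h0 := ih i j' rfl (fun t => v (Equiv.swap j' j t)) hww
        rw [h0] at hsw
        exact neg_eq_zero.mp hsw.symm
    intro v i j hv hne
    rcases lt_or_gt_of_ne (fun h : (i : ℕ) = (j : ℕ) => hne (Fin.val_injective h)) with h | h
    · exact main ((j : ℕ) - (i : ℕ) - 1) i j (by omega) v hv
    · exact main ((i : ℕ) - (j : ℕ) - 1) j i (by omega) v hv.symm
  -- the alternating map and the final linear map
  set Φalt : (Ω[R⁄ℤ]) [⋀^Fin n]→ₗ[R] M :=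
    { Φ with map_eq_zero_of_eq' := fun v i j hv hne => hgamma v i j hv hne } with hΦalt
  set fam : ∀ i : ℕ, (Ω[R⁄ℤ]) [⋀^Fin i]→ₗ[R] M :=
    Function.update (fun _ => 0) n Φalt with hfam
  set F : (⋀[R]^n (Ω[R⁄ℤ])) →ₗ[R] M :=
    (ExteriorAlgebra.liftAlternating fam).comp (Submodule.subtype _) with hFdef
  have hFval : ∀ (v : Fin n → Ω[R⁄ℤ])
      (hv : ExteriorAlgebra.ιMulti R n v ∈ ⋀[R]^n (Ω[R⁄ℤ])),
      F ⟨ExteriorAlgebra.ιMulti R n v, hv⟩ = Φ v := by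
    intro v hv
    show ExteriorAlgebra.liftAlternating fam (ExteriorAlgebra.ιMulti R n v) = Φ v
    rw [ExteriorAlgebra.liftAlternating_apply_ιMulti, hfam, Function.update_self]
    rfl
  have hFw : ∀ (s : R) (r : Fin n → Rˣ), F (wedgeD R n s r) = s • f r := by
    intro s r
    have : wedgeD R n s r = s • (⟨ExteriorAlgebra.ιMulti R n
        (fun i => KaehlerDifferential.D ℤ R ((r i : R))),
        ExteriorAlgebra.ιMulti_range R n (Set.mem_range_self _)⟩ : ⋀[R]^n (Ω[R⁄ℤ])) := rfl
    rw [this, map_smul, hFval, hΦunits r]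
  refine ⟨F, hFw, ?_⟩
  intro F' hF'
  have hgen : ∀ (v : Fin n → Ω[R⁄ℤ]) (hv : ExteriorAlgebra.ιMulti R n v ∈ ⋀[R]^n (Ω[R⁄ℤ])),
      F' ⟨ExteriorAlgebra.ιMulti R n v, hv⟩ = F ⟨ExteriorAlgebra.ιMulti R n v, hv⟩ := by
    set μ : MultilinearMap R (fun _ : Fin n => Ω[R⁄ℤ]) (⋀[R]^n (Ω[R⁄ℤ])) :=
      ((ExteriorAlgebra.ιMulti R n).toMultilinearMap).codRestrict (⋀[R]^n (Ω[R⁄ℤ]))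
        (fun v => ExteriorAlgebra.ιMulti_range R n (Set.mem_range_self _)) with hμ
    have hmleq : F'.compMultilinearMap μ = F.compMultilinearMap μ := by
      refine ml_ext S hS _ _ ?_
      intro v hv
      choose c hc using fun t => Set.mem_range.mp (hv t)
      have hveq : v = fun t => KaehlerDifferential.D ℤ R ((c t : R)) :=
        funext fun t => (hc t).symm
      rw [LinearMap.compMultilinearMap_apply, LinearMap.compMultilinearMap_apply, hveq]
      have hμval : μ (fun t => KaehlerDifferential.D ℤ R ((c t : R))) = wedgeD R n 1 c := by
        rw [wedgeD, one_smul]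
        rfl
      rw [hμval, hF' 1 c, hFw 1 c]
    intro v hv
    have h1 := congrArg (fun Ψ : MultilinearMap R (fun _ : Fin n => Ω[R⁄ℤ]) M => Ψ v) hmleq
    simp only [LinearMap.compMultilinearMap_apply] at h1
    have hμv : μ v = ⟨ExteriorAlgebra.ιMulti R n v, hv⟩ := rfl
    rwa [hμv] at h1
  apply LinearMap.ext
  rintro ⟨y, hy⟩
  have hy' : y ∈ Submodule.span R (Set.range (ExteriorAlgebra.ιMulti R n)) := by
    rw [ExteriorAlgebra.ιMulti_span_fixedDegree]
    exact hy
  revert hy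
  induction hy' using Submodule.span_induction with
  | mem x hxS =>
    intro hx
    obtain ⟨v, hv⟩ := hxS
    subst hv
    exact hgen v hx
  | zero =>
    intro h0
    rw [show (⟨0, h0⟩ : ⋀[R]^n (Ω[R⁄ℤ])) = 0 from rfl, map_zero, map_zero]
  | add x y hxm hym hx hy =>
    intro hmem
    have hx1 : x ∈ ⋀[R]^n (Ω[R⁄ℤ]) := by
      rw [← ExteriorAlgebra.ιMulti_span_fixedDegree]; exact hxm
    have hy1 : y ∈ ⋀[R]^n (Ω[R⁄ℤ]) := by
      rw [← ExteriorAlgebra.ιMulti_span_fixedDegree]; exact hym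
    rw [show (⟨x + y, hmem⟩ : ⋀[R]^n (Ω[R⁄ℤ])) = ⟨x, hx1⟩ + ⟨y, hy1⟩ from rfl,
      map_add, map_add, hx hx1, hy hy1]
  | smul c x hxm hx =>
    intro hmem
    have hx1 : x ∈ ⋀[R]^n (Ω[R⁄ℤ]) := by
      rw [← ExteriorAlgebra.ιMulti_span_fixedDegree]; exact hxm
    rw [show (⟨c • x, hmem⟩ : ⋀[R]^n (Ω[R⁄ℤ])) = c • (⟨x, hx1⟩ : ⋀[R]^n (Ω[R⁄ℤ])) from rfl,
      map_smul, map_smul, hx hx1]
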